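/- Let (A, B, C) be a recollement of abelian categories in which i^! is exact. Then for every object Y of B there is a short exact sequence 0 → i_* i^!(Y) → Y → j_* j^*(Y) → 0 in B, where the maps are the counit of (i_*, i^!) and the unit of (j^*, j_*). -/

import Mathlib

open CategoryTheory Limits

universe u₁ u₂ u₃ v₁ v₂ v₃

/-- A recollement of abelian categories `(𝒜, ℬ, 𝒞)`. -/
structure Recollement (𝒜 : Type u₁) (ℬ : Type u₂) (𝒞 : Type u₃)
    [Category.{v₁} 𝒜] [Category.{v₂} ℬ] [Category.{v₃} 𝒞]
    [Abelian 𝒜] [Abelian ℬ] [Abelian 𝒞] where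
  /-- `i^* : ℬ → 𝒜` -/
  iStar : ℬ ⥤ 𝒜
  /-- `i_* : 𝒜 → ℬ` -/
  iIns : 𝒜 ⥤ ℬ
  /-- `i^! : ℬ → 𝒜` -/
  iShriek : ℬ ⥤ 𝒜
  /-- `j_! : 𝒞 → ℬ` -/
  jShriek : 𝒞 ⥤ ℬ
  /-- `j^* : ℬ → 𝒞` -/
  jStar : ℬ ⥤ 𝒞
  /-- `j_* : 𝒞 → ℬ` -/
  jIns : 𝒞 ⥤ ℬ
  iStar_additive : iStar.Additive
  iIns_additive : iIns.Additive
  iShriek_additive : iShriek.Additive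
  jShriek_additive : jShriek.Additive
  jStar_additive : jStar.Additive
  jIns_additive : jIns.Additive
  /-- the adjoint pair `(i^*, i_*)` -/
  adj₁ : iStar ⊣ iIns
  /-- the adjoint pair `(i_*, i^!)` -/
  adj₂ : iIns ⊣ iShriek
  /-- the adjoint pair `(j_!, j^*)` -/
  adj₃ : jShriek ⊣ jStar
  /-- the adjoint pair `(j^*, j_*)` -/
  adj₄ : jStar ⊣ jIns
  iIns_full : iIns.Full
  iIns_faithful : iIns.Faithful
  jShriek_full : jShriek.Full
  jShriek_faithful : jShriek.Faithful
  jIns_full : jIns.Full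
  jIns_faithful : jIns.Faithful
  /-- `Im i_* = Ker j^*` -/
  essImage_iIns_eq_ker_jStar : ∀ b : ℬ, iIns.essImage b ↔ IsZero (jStar.obj b)

/-- If `x ≫ m` is an isomorphism and `m` is a monomorphism, then `x` is an isomorphism. -/
lemma stmt9_aux_isIso_of_comp_mono {D : Type*} [Category D] {X Y Z : D}
    (x : X ⟶ Y) (m : Y ⟶ Z) [Mono m] [IsIso (x ≫ m)] : IsIso x := by
  have h1 : x ≫ m ≫ inv (x ≫ m) = 𝟙 X := by
    rw [← Category.assoc, IsIso.hom_inv_id]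
  have h2 : (m ≫ inv (x ≫ m)) ≫ x = 𝟙 Y := by
    rw [← cancel_mono m, Category.assoc, Category.assoc, IsIso.inv_hom_id,
      Category.comp_id, Category.id_comp]
  exact ⟨m ≫ inv (x ≫ m), h1, h2⟩

set_option maxHeartbeats 1000000 in
set_option synthInstance.maxHeartbeats 400000 in
/-- In a recollement `(𝒜, ℬ, 𝒞)` with `i^!` exact, every object `Y` of `ℬ`
fits in a short exact sequence `0 → i_* i^!(Y) → Y → j_* j^*(Y) → 0` given by
the counit of `(i_*, i^!)` and the unit of `(j^*, j_*)`. -/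
theorem stmt9 (𝒜 : Type u₁) (ℬ : Type u₂) (𝒞 : Type u₃)
    [Category.{v₁} 𝒜] [Category.{v₂} ℬ] [Category.{v₃} 𝒞]
    [Abelian 𝒜] [Abelian ℬ] [Abelian 𝒞] (R : Recollement 𝒜 ℬ 𝒞)
    (h₁ : PreservesFiniteLimits R.iShriek)
    (h₂ : PreservesFiniteColimits R.iShriek) :
    ∀ Y : ℬ, ∃ w : R.adj₂.counit.app Y ≫ R.adj₄.unit.app Y = 0,
      (ShortComplex.mk (R.adj₂.counit.app Y) (R.adj₄.unit.app Y) w).ShortExact := by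
  haveI := R.iIns_additive
  haveI := R.iShriek_additive
  haveI := R.jStar_additive
  haveI := R.jIns_additive
  haveI := R.iIns_full
  haveI := R.iIns_faithful
  haveI := R.jIns_full
  haveI := R.jIns_faithful
  haveI : PreservesLimitsOfSize.{0, 0} R.iShriek := R.adj₂.rightAdjoint_preservesLimits
  haveI : PreservesLimitsOfSize.{0, 0} R.jStar := R.adj₃.rightAdjoint_preservesLimits
  haveI : PreservesColimitsOfSize.{0, 0} R.jStar := R.adj₄.leftAdjoint_preservesColimits
  -- `j^* i_* = 0`
  have zJI : ∀ a : 𝒜, IsZero (R.jStar.obj (R.iIns.obj a)) := fun a =>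
    (R.essImage_iIns_eq_ker_jStar _).mp ⟨a, ⟨Iso.refl _⟩⟩
  -- any map `i_* a ⟶ j_* c` is zero
  have hom0 : ∀ {a : 𝒜} {c : 𝒞} (f : R.iIns.obj a ⟶ R.jIns.obj c), f = 0 := by
    intro a c f
    have h0 : (R.adj₄.homEquiv _ _).symm f = 0 := (zJI a).eq_of_src _ _
    calc f = (R.adj₄.homEquiv _ _) ((R.adj₄.homEquiv _ _).symm f) :=
            ((R.adj₄.homEquiv _ _).apply_symm_apply f).symm
      _ = 0 := by rw [h0, Adjunction.homEquiv_unit, Functor.map_zero, comp_zero]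
  -- `i^! j_* = 0`
  have zShJ : ∀ c : 𝒞, IsZero (R.iShriek.obj (R.jIns.obj c)) := by
    intro c
    rw [IsZero.iff_id_eq_zero]
    have h : R.adj₂.counit.app (R.jIns.obj c) = 0 := hom0 _
    have hid : 𝟙 (R.iShriek.obj (R.jIns.obj c)) =
        (R.adj₂.homEquiv _ _) (R.adj₂.counit.app (R.jIns.obj c)) := by
      rw [Adjunction.homEquiv_unit]
      exact (R.adj₂.right_triangle_components _).symm
    rw [hid, h, Adjunction.homEquiv_unit, Functor.map_zero, comp_zero]
  -- an object killed by both `j^*` and `i^!` is zero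
  have L : ∀ b : ℬ, IsZero (R.jStar.obj b) → IsZero (R.iShriek.obj b) → IsZero b := by
    intro b hj hs
    obtain ⟨a, ⟨e⟩⟩ := (R.essImage_iIns_eq_ker_jStar b).mpr hj
    have ha : IsZero a :=
      hs.of_iso (asIso (R.adj₂.unit.app a) ≪≫ R.iShriek.mapIso e)
    exact (R.iIns.map_isZero ha).of_iso e.symm
  -- a morphism inverted by both `j^*` and `i^!` is an isomorphism
  have M : ∀ {b b' : ℬ} (φ : b ⟶ b'),
      IsIso (R.jStar.map φ) → IsIso (R.iShriek.map φ) → IsIso φ := by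
    intro b b' φ hj hs
    haveI := hj; haveI := hs
    have hker : IsZero (kernel φ) := by
      apply L
      · exact IsZero.of_iso (isZero_zero _)
          (PreservesKernel.iso R.jStar φ ≪≫ kernel.ofMono (R.jStar.map φ))
      · exact IsZero.of_iso (isZero_zero _)
          (PreservesKernel.iso R.iShriek φ ≪≫ kernel.ofMono (R.iShriek.map φ))
    have hcoker : IsZero (cokernel φ) := by
      apply L
      · exact IsZero.of_iso (isZero_zero _)
          (PreservesCokernel.iso R.jStar φ ≪≫ cokernel.ofEpi (R.jStar.map φ))
      · exact IsZero.of_iso (isZero_zero _)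
          (PreservesCokernel.iso R.iShriek φ ≪≫ cokernel.ofEpi (R.iShriek.map φ))
    haveI : Mono φ := Abelian.mono_of_kernel_ι_eq_zero φ (hker.eq_of_src _ _)
    haveI : Epi φ := Abelian.epi_of_cokernel_π_eq_zero φ (hcoker.eq_of_tgt _ _)
    exact isIso_of_mono_of_epi φ
  intro Y
  have w : R.adj₂.counit.app Y ≫ R.adj₄.unit.app Y = 0 := hom0 _
  refine ⟨w, ?_⟩
  -- the relevant maps
  set f : R.iIns.obj (R.iShriek.obj Y) ⟶ Y := R.adj₂.counit.app Y with hf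
  set g : Y ⟶ R.jIns.obj (R.jStar.obj Y) := R.adj₄.unit.app Y with hg
  -- `j^*(g)` is an isomorphism
  haveI hgj : IsIso (R.jStar.map g) := by
    haveI : IsIso (R.jStar.map g ≫ R.adj₄.counit.app (R.jStar.obj Y)) := by
      rw [R.adj₄.left_triangle_components Y]; exact IsIso.id _
    exact IsIso.of_isIso_comp_right (R.jStar.map g) (R.adj₄.counit.app (R.jStar.obj Y))
  -- `i^!(f)` is an isomorphism
  haveI hsf : IsIso (R.iShriek.map f) := by
    haveI : IsIso (R.adj₂.unit.app (R.iShriek.obj Y) ≫ R.iShriek.map f) := by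
      rw [R.adj₂.right_triangle_components Y]; exact IsIso.id _
    exact IsIso.of_isIso_comp_left (R.adj₂.unit.app (R.iShriek.obj Y)) (R.iShriek.map f)
  -- `g` is an epimorphism
  haveI hepi : Epi g := by
    apply Abelian.epi_of_cokernel_π_eq_zero
    apply IsZero.eq_of_tgt
    apply L
    · exact IsZero.of_iso (isZero_zero _)
        (PreservesCokernel.iso R.jStar g ≪≫ cokernel.ofEpi (R.jStar.map g))
    · refine IsZero.of_iso ?_ (PreservesCokernel.iso R.iShriek g)
      exact IsZero.of_epi (cokernel.π (R.iShriek.map g)) (zShJ _)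
  -- the canonical comparison `i_* i^! Y ⟶ ker g` is an isomorphism
  have hu : kernel.lift g f w ≫ kernel.ι g = f := kernel.lift_ι g f w
  haveI hiso : IsIso (kernel.lift g f w) := by
    apply M
    · have h1 : IsZero (R.jStar.obj (R.iIns.obj (R.iShriek.obj Y))) := zJI _
      have h2 : IsZero (R.jStar.obj (kernel g)) :=
        IsZero.of_iso (isZero_zero _)
          (PreservesKernel.iso R.jStar g ≪≫ kernel.ofMono (R.jStar.map g))
      have he : R.jStar.map (kernel.lift g f w) = (h1.isoZero ≪≫ h2.isoZero.symm).hom :=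
        h1.eq_of_src _ _
      rw [he]; infer_instance
    · haveI : R.iShriek.IsRightAdjoint := ⟨_, ⟨R.adj₂⟩⟩
      haveI : Mono (R.iShriek.map (kernel.ι g)) := inferInstance
      haveI : IsIso (R.iShriek.map (kernel.lift g f w) ≫ R.iShriek.map (kernel.ι g)) := by
        rw [← Functor.map_comp, hu]; exact hsf
      exact stmt9_aux_isIso_of_comp_mono (R.iShriek.map (kernel.lift g f w))
        (R.iShriek.map (kernel.ι g))
  haveI hmono : Mono f := by
    have : Mono (kernel.lift g f w ≫ kernel.ι g) := mono_comp _ _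
    rwa [hu] at this
  -- exactness: `f` is a kernel of `g`
  have hlim : IsLimit (KernelFork.ofι f w) := by
    refine KernelFork.IsLimit.ofι f w
      (fun {W'} k hk => kernel.lift g k hk ≫ inv (kernel.lift g f w)) ?_ ?_
    · intro W' k hk
      have h3 : inv (kernel.lift g f w) ≫ f = kernel.ι g := by
        rw [IsIso.inv_comp_eq]; exact hu.symm
      rw [Category.assoc, h3, kernel.lift_ι]
    · intro W' k hk m hm
      have h3 : inv (kernel.lift g f w) ≫ f = kernel.ι g := by
        rw [IsIso.inv_comp_eq]; exact hu.symm
      rw [← cancel_mono f, hm, Category.assoc, h3, kernel.lift_ι]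
  exact ShortComplex.ShortExact.mk (ShortComplex.exact_of_f_is_kernel _ hlim)
    (mono_f := hmono) (epi_g := hepi)
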